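/- Let μ = Σ_{q=1}^{c} λ_q · (P_{I^q_{n_q}} ∘ ⋯ ∘ P_{I^q_1}) be a projection matrix polynomial on Row(A) with all weights λ_q > 0. If μ is complete, i.e. there exists some term q₀ whose index sets satisfy span{v_h : h ∈ I^{q₀}_1 ∪ ⋯ ∪ I^{q₀}_{n_{q₀}}} = Row(A), then the operator norm of μ restricted to Row(A) is strictly less than its weight ⌈μ⌉ = Σ_{q=1}^{c} λ_q; that is, for every nonzero x ∈ Row(A), ‖μ(x)‖ < (Σ_{q=1}^{c} λ_q)·‖x‖. -/

import Mathlib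

/-- The orthogonal projection of `E` onto the orthogonal complement of
`span {v h : h ∈ I}`, i.e. the projection `I - A_I† A_I` onto the null space of the
row block `A_I` of the matrix `A` whose rows are the vectors `v h`. -/
noncomputable def projPerp {E : Type*} [NormedAddCommGroup E] [InnerProductSpace ℝ E]
    [FiniteDimensional ℝ E] {m : ℕ} (v : Fin m → E) (I : Set (Fin m)) (x : E) : E :=
  (Submodule.orthogonalProjectionOnto (Submodule.span ℝ (v '' I))ᗮ x : E)

section aux
variable {E : Type*} [NormedAddCommGroup E] [InnerProductSpace ℝ E] [FiniteDimensional ℝ E]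

private lemma pyth_sq (K : Submodule ℝ E) (x : E) :
    ‖x‖ ^ 2 = ‖(Submodule.orthogonalProjectionOnto K x : E)‖ ^ 2 + ‖x - (Submodule.orthogonalProjectionOnto K x : E)‖ ^ 2 := by
  have h : inner (𝕜 := ℝ) (Submodule.orthogonalProjectionOnto K x : E) (x - (Submodule.orthogonalProjectionOnto K x : E)) = 0 := by
    rw [real_inner_comm]
    exact Submodule.starProjection_inner_eq_zero x _ (Submodule.orthogonalProjectionOnto K x).2
  have h2 := norm_add_sq_real (Submodule.orthogonalProjectionOnto K x : E) (x - (Submodule.orthogonalProjectionOnto K x : E))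
  rw [add_sub_cancel] at h2
  rw [h2, h]; ring

private lemma norm_proj_le (K : Submodule ℝ E) (x : E) :
    ‖(Submodule.orthogonalProjectionOnto K x : E)‖ ≤ ‖x‖ := by
  nlinarith [pyth_sq K x, norm_nonneg x,
    norm_nonneg (Submodule.orthogonalProjectionOnto K x : E), sq_nonneg ‖x - Submodule.orthogonalProjectionOnto K x‖]

private lemma proj_eq_of_norm_eq (K : Submodule ℝ E) (x : E)
    (h : ‖(Submodule.orthogonalProjectionOnto K x : E)‖ = ‖x‖) :
    (Submodule.orthogonalProjectionOnto K x : E) = x := by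
  have hp := pyth_sq K x
  rw [h] at hp
  have hsq : ‖x - (Submodule.orthogonalProjectionOnto K x : E)‖ ^ 2 = 0 := by linarith
  have h0 : ‖x - (Submodule.orthogonalProjectionOnto K x : E)‖ = 0 :=
    pow_eq_zero_iff (two_ne_zero) |>.mp hsq
  have := sub_eq_zero.mp (norm_eq_zero.mp h0)
  exact this.symm

private lemma fold_norm_le {m : ℕ} (v : Fin m → E) (L : List (Set (Fin m))) (x : E) :
    ‖(L.map (projPerp v)).foldl (fun y f => f y) x‖ ≤ ‖x‖ := by
  induction L generalizing x with
  | nil => simp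
  | cons a l ih =>
      simp only [List.map_cons, List.foldl_cons]
      exact le_trans (ih (projPerp v a x)) (norm_proj_le _ x)

private lemma fold_mem_of_norm_eq {m : ℕ} (v : Fin m → E) (L : List (Set (Fin m))) (x : E)
    (h : ‖(L.map (projPerp v)).foldl (fun y f => f y) x‖ = ‖x‖) :
    ∀ I ∈ L, x ∈ (Submodule.span ℝ (v '' I))ᗮ := by
  induction L generalizing x with
  | nil => simp
  | cons a l ih =>
      simp only [List.map_cons, List.foldl_cons] at h
      have h1 : ‖projPerp v a x‖ ≤ ‖x‖ := norm_proj_le _ x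
      have h2 : ‖(l.map (projPerp v)).foldl (fun y f => f y) (projPerp v a x)‖
          ≤ ‖projPerp v a x‖ := fold_norm_le v l _
      have heq : ‖projPerp v a x‖ = ‖x‖ := le_antisymm h1 (by rw [← h]; exact h2)
      have hfix : projPerp v a x = x := proj_eq_of_norm_eq _ x heq
      have hmem : x ∈ (Submodule.span ℝ (v '' a))ᗮ := by
        rw [← hfix]; exact (Submodule.orthogonalProjectionOnto _ x).2
      intro I hI
      rcases List.mem_cons.mp hI with rfl | hI'
      · exact hmem
      · exact ih x (by rwa [hfix] at h) I hI'

end aux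

/-- Let `μ = Σ_{q} λ_q · (P_{I^q_{n_q}} ∘ ⋯ ∘ P_{I^q_1})` be a
projection matrix polynomial on `Row(A)` with all weights `λ_q > 0`.  If `μ` is
complete, i.e. some term `q₀` has index sets whose union of rows spans `Row(A)`, then
the operator norm of `μ` restricted to `Row(A)` is strictly less than its weight
`⌈μ⌉ = Σ_q λ_q`: for every nonzero `x ∈ Row(A)`, `‖μ(x)‖ < (Σ_q λ_q)·‖x‖`. -/
theorem norm_projPolynomial_lt_weight_of_complete
    {E : Type*} [NormedAddCommGroup E] [InnerProductSpace ℝ E] [FiniteDimensional ℝ E]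
    {m c : ℕ} (v : Fin m → E)
    (lam : Fin c → ℝ) (hlam : ∀ q, 0 < lam q)
    (nq : Fin c → ℕ) (Is : (q : Fin c) → Fin (nq q) → Set (Fin m))
    (q₀ : Fin c)
    (hcomplete : Submodule.span ℝ (v '' (⋃ t, Is q₀ t)) = Submodule.span ℝ (Set.range v)) :
    ∀ x ∈ Submodule.span ℝ (Set.range v), x ≠ 0 →
      ‖∑ q, lam q • (List.ofFn fun t => projPerp v (Is q t)).foldl (fun y f => f y) x‖
        < (∑ q, lam q) * ‖x‖ := by
  intro x hx hx0
  have hlist : ∀ q : Fin c, (List.ofFn fun t => projPerp v (Is q t))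
      = (List.ofFn (Is q)).map (projPerp v) := by
    intro q; rw [List.map_ofFn]; rfl
  set F : Fin c → E := fun q =>
    ((List.ofFn (Is q)).map (projPerp v)).foldl (fun y f => f y) x with hF
  have hFle : ∀ q, ‖F q‖ ≤ ‖x‖ := fun q => fold_norm_le v _ x
  have hFlt : ‖F q₀‖ < ‖x‖ := by
    rcases lt_or_eq_of_le (hFle q₀) with h | h
    · exact h
    · exfalso
      have hmem := fold_mem_of_norm_eq v (List.ofFn (Is q₀)) x h
      have hperp : x ∈ (Submodule.span ℝ (v '' ⋃ t, Is q₀ t))ᗮ := by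
        rw [Set.image_iUnion, Submodule.span_iUnion, ← Submodule.iInf_orthogonal]
        exact Submodule.mem_iInf _ |>.mpr fun t => hmem _ (List.mem_ofFn.mpr ⟨t, rfl⟩)
      rw [hcomplete] at hperp
      exact hx0 (inner_self_eq_zero.mp ((Submodule.mem_orthogonal _ _).mp hperp x hx))
  calc ‖∑ q, lam q • (List.ofFn fun t => projPerp v (Is q t)).foldl (fun y f => f y) x‖
      = ‖∑ q, lam q • F q‖ := by
        congr 1; refine Finset.sum_congr rfl fun q _ => ?_; rw [hlist q]
    _ ≤ ∑ q, ‖lam q • F q‖ := norm_sum_le _ _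
    _ = ∑ q, lam q * ‖F q‖ := by
        refine Finset.sum_congr rfl fun q _ => ?_
        rw [norm_smul, Real.norm_eq_abs, abs_of_pos (hlam q)]
    _ < ∑ q, lam q * ‖x‖ := by
        refine Finset.sum_lt_sum (fun q _ => mul_le_mul_of_nonneg_left (hFle q) (hlam q).le)
          ⟨q₀, Finset.mem_univ _, mul_lt_mul_of_pos_left hFlt (hlam q₀)⟩
    _ = (∑ q, lam q) * ‖x‖ := (Finset.sum_mul _ _ _).symm
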